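/- On ℝ^p let f be the ℓ1 norm, f(x) = Σ_i |x_i|, and let g be the ℓq norm for a real q ≥ 1, g(x) = (Σ_i |x_i|^q)^{1/q}. Let (a, b) be a linear classifier with a ≠ 0, let ρ > 0, let x_F ∈ ℝ^p satisfy ⟪a, x_F⟫ < b, and let x_RCF be an optimal robust counterfactual of x_F under f with robustness norm g and radius ρ, with x_RCF ≠ x_F. Set v := (1 / f(x_RCF − x_F)) • (x_RCF − x_F). Then for every d ∈ ℝ with d ≥ ρ · p^{1 − 1/q}, the point x̄ := x_RCF − d • v satisfies ⟪a, x̄⟫ ≤ b, i.e., x̄ has the same classification as x_F. -/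

import Mathlib

open Finset

noncomputable section

/-- The standard inner product on `Fin p → ℝ`. -/
def dot {p : ℕ} (a x : Fin p → ℝ) : ℝ := ∑ k, a k * x k

/-- `f` is a norm on `ℝ^p`. -/
def IsNorm {p : ℕ} (f : (Fin p → ℝ) → ℝ) : Prop :=
  (∀ x, f x = 0 ↔ x = 0) ∧ (∀ (c : ℝ) (x : Fin p → ℝ), f (c • x) = |c| * f x) ∧
    (∀ x y, f (x + y) ≤ f x + f y)

/-- The dual norm `f*(w) = sup { ⟪w, v⟫ : f v ≤ 1 }`. -/
def dualNorm {p : ℕ} (f : (Fin p → ℝ) → ℝ) (w : Fin p → ℝ) : ℝ :=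
  sSup {t : ℝ | ∃ v : Fin p → ℝ, f v ≤ 1 ∧ t = dot w v}

/-- `xCF` is an optimal counterfactual of the factual `xF` (classified 'No') under norm `f`. -/
def IsOptCF {p : ℕ} (a : Fin p → ℝ) (b : ℝ) (f : (Fin p → ℝ) → ℝ)
    (xF xCF : Fin p → ℝ) : Prop :=
  b ≤ dot a xCF ∧ ∀ z : Fin p → ℝ, b ≤ dot a z → f (xCF - xF) ≤ f (z - xF)

/-- `xRCF` is an optimal robust counterfactual of the factual `xF` (classified 'No')
under norm `f`, with robustness norm `g` and radius `ρ`. -/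
def IsOptRCF {p : ℕ} (a : Fin p → ℝ) (b : ℝ) (f g : (Fin p → ℝ) → ℝ) (ρ : ℝ)
    (xF xRCF : Fin p → ℝ) : Prop :=
  (∀ s : Fin p → ℝ, g s ≤ ρ → b ≤ dot a (xRCF + s)) ∧
    ∀ z : Fin p → ℝ, (∀ s : Fin p → ℝ, g s ≤ ρ → b ≤ dot a (z + s)) →
      f (xRCF - xF) ≤ f (z - xF)

/-- `w` is a subgradient of `f` at `x₀`. -/
def IsSubgradient {p : ℕ} (f : (Fin p → ℝ) → ℝ) (x₀ w : Fin p → ℝ) : Prop :=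
  ∀ y : Fin p → ℝ, f x₀ + dot w (y - x₀) ≤ f y

/-- Corollary 4(i): for the `ℓ1` norm as counterfactual distance and `ℓq` robustness
norm, moving back from the robust counterfactual along the counterfactual direction by
any `d ≥ ρ·p^{1−1/q}` gives a point with the same classification as the factual. -/
lemma dot_add' {p : ℕ} (a x y : Fin p → ℝ) : dot a (x + y) = dot a x + dot a y := by
  simp [dot, mul_add, Finset.sum_add_distrib]

lemma dot_sub' {p : ℕ} (a x y : Fin p → ℝ) : dot a (x - y) = dot a x - dot a y := by
  simp [dot, mul_sub, Finset.sum_sub_distrib]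

lemma dot_smul' {p : ℕ} (a : Fin p → ℝ) (c : ℝ) (x : Fin p → ℝ) :
    dot a (c • x) = c * dot a x := by
  simp [dot, Finset.mul_sum, mul_left_comm]

lemma dot_neg' {p : ℕ} (a x : Fin p → ℝ) : dot a (-x) = -dot a x := by
  simp [dot]

theorem rcf_backtrack_l1_lq {p : ℕ} (hp : 1 ≤ p) (q : ℝ) (hq : 1 ≤ q)
    (a : Fin p → ℝ) (ha : a ≠ 0) (b : ℝ) (ρ : ℝ) (hρ : 0 < ρ)
    (xF xRCF : Fin p → ℝ) (hxF : dot a xF < b)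
    (hopt : IsOptRCF a b (fun x => ∑ i, |x i|)
      (fun x => (∑ i, |x i| ^ q) ^ (1 / q)) ρ xF xRCF)
    (hne : xRCF ≠ xF) :
    ∀ d : ℝ, ρ * (p : ℝ) ^ (1 - 1 / q) ≤ d →
      dot a (xRCF - d • ((1 / ∑ i, |(xRCF - xF) i|) • (xRCF - xF))) ≤ b := by
  intro d hd
  have hpne : Nonempty (Fin p) := ⟨⟨0, hp⟩⟩
  set u : Fin p → ℝ := xRCF - xF with hu
  set δ : ℝ := ∑ i, |u i| with hδdef
  have hδpos : 0 < δ := by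
    have hune : u ≠ 0 := sub_ne_zero.mpr hne
    obtain ⟨j, hj⟩ := Function.ne_iff.mp hune
    exact Finset.sum_pos' (fun i _ => abs_nonneg _) ⟨j, Finset.mem_univ j, abs_pos.mpr hj⟩
  -- max coordinate of |a|
  have huniv : (Finset.univ : Finset (Fin p)).Nonempty := Finset.univ_nonempty
  set M : ℝ := Finset.univ.sup' huniv (fun i => |a i|) with hMdef
  obtain ⟨i₀, -, hi₀⟩ := Finset.exists_mem_eq_sup' huniv (fun i => |a i|)
  have hle_M : ∀ i, |a i| ≤ M := by
    intro i; rw [hMdef]; exact Finset.le_sup' (fun i => |a i|) (Finset.mem_univ i)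
  have hMpos : 0 < M := by
    obtain ⟨j, hj⟩ := Function.ne_iff.mp ha
    exact lt_of_lt_of_le (abs_pos.mpr hj) (hle_M j)
  have hai₀ : |a i₀| = M := hi₀.symm
  -- ℓ1/ℓ∞ Hölder
  have hHolder1 : ∀ w : Fin p → ℝ, dot a w ≤ M * ∑ i, |w i| := by
    intro w
    calc dot a w ≤ ∑ i, M * |w i| := by
          refine Finset.sum_le_sum fun i _ => ?_
          calc a i * w i ≤ |a i * w i| := le_abs_self _
            _ = |a i| * |w i| := abs_mul _ _
            _ ≤ M * |w i| := mul_le_mul_of_nonneg_right (hle_M i) (abs_nonneg _)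
      _ = M * ∑ i, |w i| := (Finset.mul_sum _ _ _).symm
  -- dual norm facts
  obtain ⟨N, hNnn, hHq, hs₀, hNM⟩ :
      ∃ N : ℝ, 0 ≤ N ∧
        (∀ s : Fin p → ℝ, (∑ i, |s i| ^ q) ^ (1/q) ≤ ρ → -(ρ * N) ≤ dot a s) ∧
        (∃ s₀ : Fin p → ℝ, (∑ i, |s₀ i| ^ q) ^ (1/q) ≤ ρ ∧ dot a s₀ ≤ -(ρ * N)) ∧
        N ≤ (p : ℝ) ^ (1 - 1/q) * M := by
    rcases eq_or_lt_of_le hq with hq1 | hq1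
    · -- case q = 1
      subst hq1
      have hone : ∀ w : Fin p → ℝ, (∑ i, |w i| ^ (1:ℝ)) ^ (1/(1:ℝ)) = ∑ i, |w i| := by
        intro w; simp [Real.rpow_one]
      refine ⟨M, hMpos.le, ?_, ?_, ?_⟩
      · intro s hs
        rw [hone] at hs
        have h1 := hHolder1 (-s)
        rw [dot_neg'] at h1
        have h2 : ∑ i, |(-s) i| = ∑ i, |s i| := by simp
        rw [h2] at h1
        nlinarith
      · refine ⟨fun j => if j = i₀ then -(ρ * a i₀ / M) else 0, le_of_eq ?_, le_of_eq ?_⟩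
        · rw [hone]
          have hv : |(-(ρ * a i₀ / M))| = ρ := by
            rw [abs_neg, abs_div, abs_mul, abs_of_pos hρ, hai₀, abs_of_pos hMpos,
              mul_div_assoc, div_self hMpos.ne', mul_one]
          rw [show (∑ j, |(fun j => if j = i₀ then -(ρ * a i₀ / M) else 0) j|)
              = ∑ j, (if j = i₀ then ρ else 0) from
            Finset.sum_congr rfl fun j _ => by by_cases hj : j = i₀ <;> simp [hj, hv]]
          simp
        · have h5 : a i₀ * a i₀ = M * M := by
            rw [← abs_mul_abs_self (a i₀), hai₀]
          rw [dot]
          rw [show (∑ k, a k * (fun j => if j = i₀ then -(ρ * a i₀ / M) else 0) k)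
              = ∑ k, (if k = i₀ then a i₀ * (-(ρ * a i₀ / M)) else 0) from
            Finset.sum_congr rfl fun k _ => by by_cases hk : k = i₀ <;> simp [hk]]
          rw [Finset.sum_ite_eq' Finset.univ i₀ (fun _ => a i₀ * (-(ρ * a i₀ / M)))]
          simp only [Finset.mem_univ, if_true]
          have h6 : a i₀ * -(ρ * a i₀ / M) = -(ρ * (a i₀ * a i₀) / M) := by ring
          rw [h6, h5]
          field_simp
      · simp
    · -- case 1 < q
      set r : ℝ := q / (q - 1) with hrdef
      have hq0 : 0 < q := lt_trans zero_lt_one hq1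
      have hqm1 : 0 < q - 1 := by linarith
      have hconj : Real.HolderConjugate r q :=
        (Real.HolderConjugate.conjExponent hq1).symm
      have hr1 : 1 < r := hconj.lt
      have hr0 : 0 < r := lt_trans zero_lt_one hr1
      have hrm1 : (0:ℝ) < r - 1 := by linarith
      have hrq : (r - 1) * q = r := by
        rw [hrdef]; field_simp; ring
      have hinvr : 1 / r = 1 - 1 / q := by
        rw [hrdef]; field_simp
      set S : ℝ := ∑ i, |a i| ^ r with hSdef
      have hSpos : 0 < S := by
        have h1 : 0 < |a i₀| ^ r := Real.rpow_pos_of_pos (hai₀ ▸ hMpos) r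
        exact Finset.sum_pos' (fun i _ => Real.rpow_nonneg (abs_nonneg _) r)
          ⟨i₀, Finset.mem_univ _, h1⟩
      set N : ℝ := S ^ (1/r) with hNdef
      have hNpos : 0 < N := Real.rpow_pos_of_pos hSpos _
      have hNr : N ^ r = S := by
        rw [hNdef, ← Real.rpow_mul hSpos.le, one_div_mul_cancel hr0.ne', Real.rpow_one]
      refine ⟨N, hNpos.le, ?_, ?_, ?_⟩
      · -- Hölder for ℓq
        intro s hs
        have h1 := Real.inner_le_Lp_mul_Lq Finset.univ a (fun i => -(s i)) hconj
        have h2 : ∑ i, a i * (-(s i)) = -dot a s := by simp [dot]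
        have h3 : (∑ i, |(fun i => -(s i)) i| ^ q) = ∑ i, |s i| ^ q := by simp
        rw [h2, h3, ← hSdef, ← hNdef] at h1
        have h4 : (∑ i, |s i| ^ q) ^ (1/q) ≤ ρ := hs
        have h5 : N * (∑ i, |s i| ^ q) ^ (1/q) ≤ N * ρ :=
          mul_le_mul_of_nonneg_left h4 hNpos.le
        linarith
      · -- extremal s₀
        set c : ℝ := ρ / N ^ (r-1) with hcdef
        have hNr1pos : 0 < N ^ (r-1) := Real.rpow_pos_of_pos hNpos _
        have hcpos : 0 < c := div_pos hρ hNr1pos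
        refine ⟨fun i => -(c * (a i * |a i| ^ (r-2))), ?_, ?_⟩
        · -- g s₀ = ρ
          have habs : ∀ i, |(-(c * (a i * |a i| ^ (r-2))))| = c * |a i| ^ (r-1) := by
            intro i
            rcases eq_or_ne (a i) 0 with h | h
            · rw [h]
              simp [Real.zero_rpow hrm1.ne']
            · have hpos : 0 < |a i| := abs_pos.mpr h
              rw [abs_neg, abs_mul, abs_of_pos hcpos, abs_mul,
                abs_of_nonneg (Real.rpow_nonneg (abs_nonneg _) _)]
              congr 1
              rw [show r - 1 = 1 + (r-2) by ring, Real.rpow_add hpos, Real.rpow_one]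
          have hpow : ∀ i, |(-(c * (a i * |a i| ^ (r-2))))| ^ q = c ^ q * |a i| ^ r := by
            intro i
            rw [habs i, Real.mul_rpow hcpos.le (Real.rpow_nonneg (abs_nonneg _) _),
              ← Real.rpow_mul (abs_nonneg _), hrq]
          have hsum : (∑ i, |(-(c * (a i * |a i| ^ (r-2))))| ^ q) = ρ ^ q := by
            simp only [hpow, ← Finset.mul_sum, ← hSdef]
            rw [hcdef, Real.div_rpow hρ.le hNr1pos.le, ← Real.rpow_mul hNpos.le, hrq, ← hNr]
            field_simp
          rw [hsum, ← Real.rpow_mul hρ.le, mul_one_div_cancel hq0.ne', Real.rpow_one]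
        · -- dot value
          have hterm : ∀ i, a i * (-(c * (a i * |a i| ^ (r-2)))) = -(c * |a i| ^ r) := by
            intro i
            rcases eq_or_ne (a i) 0 with h | h
            · rw [h]; simp [Real.zero_rpow hr0.ne']
            · have hpos : 0 < |a i| := abs_pos.mpr h
              have h6 : |a i| ^ r = a i * a i * |a i| ^ (r-2) := by
                have h7 : |a i| ^ ((1:ℝ)+1+(r-2)) = |a i|^(1:ℝ) * |a i|^(1:ℝ) * |a i|^(r-2) := by
                  rw [Real.rpow_add hpos, Real.rpow_add hpos]
                rw [show (1:ℝ)+1+(r-2) = r by ring] at h7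
                rw [h7, Real.rpow_one, abs_mul_abs_self]
              rw [h6]; ring
          have : dot a (fun i => -(c * (a i * |a i| ^ (r-2)))) = -(c * S) := by
            rw [dot]
            simp only [hterm]
            rw [hSdef, Finset.mul_sum, ← Finset.sum_neg_distrib]
          rw [this]
          have h7 : c * S = ρ * N := by
            rw [hcdef, ← hNr, div_mul_eq_mul_div, mul_div_assoc,
              ← Real.rpow_sub hNpos, show r - (r-1) = 1 by ring, Real.rpow_one]
          rw [h7]
      · -- N ≤ p^{1/r} M
        have h1 : S ≤ (p:ℝ) * M ^ r := by
          calc S ≤ ∑ _i : Fin p, M ^ r :=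
                Finset.sum_le_sum fun i _ =>
                  Real.rpow_le_rpow (abs_nonneg _) (hle_M i) hr0.le
            _ = (p:ℝ) * M ^ r := by
                simp [Finset.sum_const, nsmul_eq_mul]
        have h2 : N ≤ ((p:ℝ) * M ^ r) ^ (1/r) := by
          rw [hNdef]
          exact Real.rpow_le_rpow hSpos.le h1 (by positivity)
        have h3 : ((p:ℝ) * M ^ r) ^ (1/r) = (p:ℝ) ^ (1/r) * M := by
          rw [Real.mul_rpow (by positivity) (Real.rpow_nonneg hMpos.le _),
            ← Real.rpow_mul hMpos.le, mul_one_div_cancel hr0.ne', Real.rpow_one]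
        rw [← hinvr]
        rw [h3] at h2
        exact h2
  set b' : ℝ := b + ρ * N with hb'
  have hb'b : b ≤ b' := le_add_of_nonneg_right (mul_nonneg hρ.le hNnn)
  have hdu_eq : dot a u = dot a xRCF - dot a xF := by rw [hu, dot_sub']
  -- optimality against the explicit candidate xF + t • e
  have hMδ : M * δ ≤ b' - dot a xF := by
    set t : ℝ := (b' - dot a xF) / M with ht
    have htpos : 0 < t := div_pos (by linarith) hMpos
    set e : Fin p → ℝ := fun j => if j = i₀ then a i₀ / M else 0 with he
    have hdot_e : dot a e = M := by
      rw [dot]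
      rw [Finset.sum_eq_single i₀ (fun j _ hj => by simp [he, hj]) (by simp)]
      have h5 : a i₀ * a i₀ = M * M := by
        rw [← abs_mul_abs_self (a i₀), hai₀]
      rw [he]
      simp only [if_pos rfl, ↓reduceIte]
      field_simp
      linarith [h5]
    have hsum_e : ∑ j, |e j| = 1 := by
      rw [Finset.sum_eq_single i₀ (fun j _ hj => by simp [he, hj]) (by simp)]
      simp [he, abs_div, hai₀, abs_of_pos hMpos, div_self hMpos.ne']
    have hfeas : ∀ s : Fin p → ℝ, (∑ i, |s i| ^ q) ^ (1/q) ≤ ρ →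
        b ≤ dot a ((xF + t • e) + s) := by
      intro s hs
      have h1 := hHq s hs
      rw [dot_add', dot_add', dot_smul', hdot_e]
      have h6 : t * M = b' - dot a xF := div_mul_cancel₀ _ hMpos.ne'
      linarith
    have h2 : (∑ i, |u i|) ≤ ∑ i, |((xF + t • e) - xF) i| := hopt.2 _ hfeas
    have h3 : ∑ i, |((xF + t • e) - xF) i| = t := by
      have h7 : (xF + t • e) - xF = t • e := add_sub_cancel_left xF _
      rw [h7]
      have : ∀ i, |(t • e) i| = t * |e i| := by
        intro i
        simp [abs_mul, abs_of_pos htpos]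
      simp only [this, ← Finset.mul_sum, hsum_e, mul_one]
    rw [h3] at h2
    have h8 : M * t = b' - dot a xF := by
      rw [ht]; field_simp
    nlinarith
  have hub : dot a xRCF ≤ b' := by
    have h4 := hHolder1 u
    rw [hdu_eq, ← hδdef] at h4; linarith
  -- lower bound
  obtain ⟨s₀, hs₀g, hs₀d⟩ := hs₀
  have hlb : b' ≤ dot a xRCF := by
    have h1 := hopt.1 s₀ hs₀g
    rw [dot_add'] at h1
    linarith
  -- M*δ ≤ b' - dot a xF comes from hub proof; redo:
  have hdu : M * δ ≤ dot a u := by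
    rw [hdu_eq]; linarith
  -- final computation
  have hDpos : 0 < ρ * (p : ℝ) ^ (1 - 1/q) :=
    mul_pos hρ (Real.rpow_pos_of_pos (by exact_mod_cast Nat.lt_of_lt_of_le Nat.zero_lt_one hp) _)
  have hdpos : 0 < d := lt_of_lt_of_le hDpos hd
  have key : dot a (xRCF - d • ((1 / δ) • u)) = dot a xRCF - d * ((1/δ) * dot a u) := by
    rw [dot_sub', dot_smul', dot_smul']
  rw [key]
  have h1 : d * ((1/δ) * dot a u) ≥ d * ((1/δ) * (M * δ)) := by
    have : (0:ℝ) ≤ d * (1/δ) := le_of_lt (mul_pos hdpos (by positivity))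
    nlinarith [hdu]
  have h2 : d * ((1/δ) * (M * δ)) = d * M := by
    field_simp
  have h3 : ρ * N ≤ d * M := by
    calc ρ * N ≤ ρ * ((p : ℝ) ^ (1 - 1/q) * M) :=
          mul_le_mul_of_nonneg_left hNM hρ.le
      _ = (ρ * (p : ℝ) ^ (1 - 1/q)) * M := by ring
      _ ≤ d * M := mul_le_mul_of_nonneg_right hd hMpos.le
  linarith
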